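/- Let A = (A_j)_{j≥1} be a partition of ℝ^d into cubes of side length s ∈ (0,1], X := [-1,1]^d, r ≥ s/2, and assume X_0 = ∂_X X_1 = ∂_X X_{-1}. Then for every measurable function f : X → ℝ (in particular for the empirical histogram rule h_{D,s}) one has R_{L,P}(f) − R*_{L,P} ≤ (R_{L_{N_r},P}(f) − R*_{L_{N_r},P}) + (R_{L_{F_r},P}(f) − R*_{L_{F_r},P}). -/

import Mathlib

open MeasureTheory Set Metric
open scoped Classical ENNReal NNReal

noncomputable section

namespace RefinedMargin

abbrev Pt (d : ℕ) := Fin d → ℝ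

/-- The input space `X = [-1,1]^d` (with the supremum norm coming from `Fin d → ℝ`). -/
def cubeX (d : ℕ) : Set (Pt d) := Set.Icc (fun _ => (-1 : ℝ)) (fun _ => (1 : ℝ))

variable {d : ℕ} {s : ℝ}

/-- `X_1 = {x ∈ X : η x > 1/2}`. -/
def X1 (η : Pt d → ℝ) : Set (Pt d) := {x | x ∈ cubeX d ∧ 1 / 2 < η x}

/-- `X_{-1} = {x ∈ X : η x < 1/2}`. -/
def Xm1 (η : Pt d → ℝ) : Set (Pt d) := {x | x ∈ cubeX d ∧ η x < 1 / 2}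

/-- `X_0 = {x ∈ X : η x = 1/2}`. -/
def X0 (η : Pt d → ℝ) : Set (Pt d) := {x | x ∈ cubeX d ∧ η x = 1 / 2}

/-- Distance to the decision boundary. -/
def Δ (η : Pt d → ℝ) (x : Pt d) : ℝ :=
  if x ∈ Xm1 η then Metric.infDist x (X1 η)
  else if x ∈ X1 η then Metric.infDist x (Xm1 η)
  else 0

/-- Relative boundary of `T` in `X`. -/
def relBoundary (X T : Set (Pt d)) : Set (Pt d) := closure T ∩ closure (X \ T) ∩ X

/-- `T` is `m`-rectifiable: the image of a bounded subset of `ℝ^m` under a Lipschitz map. -/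
def IsRectifiable (m : ℕ) (T : Set (Pt d)) : Prop :=
  ∃ (B : Set (Fin m → ℝ)) (g : (Fin m → ℝ) → Pt d) (K : NNReal),
    Bornology.IsBounded B ∧ LipschitzOnWith K g B ∧ g '' B = T

/-- Margin exponent `α` with constant `cME`. -/
def HasME (μ : Measure (Pt d)) (η : Pt d → ℝ) (α cME : ℝ) : Prop :=
  ∀ t : ℝ, 0 < t → μ {x | Δ η x < t} ≤ ENNReal.ofReal ((cME * t) ^ α)

/-- Margin-noise exponent `β` with constant `cMNE`. -/
def HasMNE (μ : Measure (Pt d)) (η : Pt d → ℝ) (β cMNE : ℝ) : Prop :=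
  ∀ t : ℝ, 0 < t → (∫ x in {x | Δ η x < t}, |2 * η x - 1| ∂μ) ≤ (cMNE * t) ^ β

/-- The distance to the decision boundary controls the noise from below with
exponent `γ` and constant `cLC`. -/
def LowerControl (μ : Measure (Pt d)) (η : Pt d → ℝ) (γ cLC : ℝ) : Prop :=
  ∀ᵐ x ∂μ, Δ η x ^ γ ≤ cLC * |2 * η x - 1|

/-- A partition of `ℝ^d` into (half-open) cubes of side length `s`. -/
structure CubePartition (d : ℕ) (s : ℝ) where
  cell : ℕ → Set (Pt d)
  isCube : ∀ j, ∃ a : Pt d, cell j = {x | ∀ i, a i ≤ x i ∧ x i < a i + s}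
  covers : ∀ x : Pt d, ∃! j, x ∈ cell j

namespace CubePartition

/-- Index of the unique cell containing `x`. -/
def idx (𝒜 : CubePartition d s) (x : Pt d) : ℕ := (𝒜.covers x).choose

/-- The unique cell `A(x)` containing `x`. -/
def cellOf (𝒜 : CubePartition d s) (x : Pt d) : Set (Pt d) := 𝒜.cell (𝒜.idx x)

/-- Indices of cells intersecting `X`. -/
def J (𝒜 : CubePartition d s) : Set ℕ := {j | (𝒜.cell j ∩ cubeX d).Nonempty}

/-- Indices of cells near the decision boundary. -/
def JN (𝒜 : CubePartition d s) (η : Pt d → ℝ) (r : ℝ) : Set ℕ :=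
  {j | j ∈ 𝒜.J ∧ ∀ x ∈ 𝒜.cell j ∩ cubeX d, Δ η x ≤ 3 * r}

/-- Indices of cells far from the decision boundary. -/
def JF (𝒜 : CubePartition d s) (η : Pt d → ℝ) (r : ℝ) : Set ℕ :=
  {j | j ∈ 𝒜.J ∧ ∀ x ∈ 𝒜.cell j ∩ cubeX d, r ≤ Δ η x}

/-- `N_r`, the union of the cells near the decision boundary. -/
def Nr (𝒜 : CubePartition d s) (η : Pt d → ℝ) (r : ℝ) : Set (Pt d) := ⋃ j ∈ 𝒜.JN η r, 𝒜.cell j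

/-- `F_r`, the union of the cells far from the decision boundary. -/
def Fr (𝒜 : CubePartition d s) (η : Pt d → ℝ) (r : ℝ) : Set (Pt d) := ⋃ j ∈ 𝒜.JF η r, 𝒜.cell j

end CubePartition

/-- `sign` with the convention `sign 0 = 1`. -/
def sgn (t : ℝ) : ℝ := if 0 ≤ t then 1 else -1

/-- The classification loss `L(y,t) = 1_{(-∞,0]}(y · sign t)`. -/
def cLoss (y t : ℝ) : ℝ := if y * sgn t ≤ 0 then 1 else 0

/-- The restricted classification loss `L_T(x,y,t) = 1_T(x) L(y,t)`. -/
def rLoss (T : Set (Pt d)) (x : Pt d) (y t : ℝ) : ℝ := if x ∈ T then cLoss y t else 0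

/-- The joint distribution `P` on `X × {-1,1} ⊆ ℝ^d × ℝ` built from the marginal `μ = P_X`
and the posterior probability `η`. -/
def joint (μ : Measure (Pt d)) (η : Pt d → ℝ) : Measure (Pt d × ℝ) :=
  μ.bind fun x =>
    ENNReal.ofReal (η x) • Measure.dirac (x, 1) + ENNReal.ofReal (1 - η x) • Measure.dirac (x, -1)

/-- The risk `R_{L_T,P}(f)`. -/
def risk (P : Measure (Pt d × ℝ)) (T : Set (Pt d)) (f : Pt d → ℝ) : ℝ :=
  ∫ z, rLoss T z.1 z.2 (f z.1) ∂P

/-- The Bayes risk `R*_{L_T,P}`, the infimum over all measurable functions. -/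
def bayesRisk (P : Measure (Pt d × ℝ)) (T : Set (Pt d)) : ℝ :=
  ⨅ f : { f : Pt d → ℝ // Measurable f }, risk P T f.1

/-- The Bayes decision function `sign (2η - 1)`. -/
def bayesF (η : Pt d → ℝ) (x : Pt d) : ℝ := sgn (2 * η x - 1)

/-- The empirical risk of `f` on the dataset `D` for the restricted loss `L_T`. -/
def empRisk {n : ℕ} (D : Fin n → Pt d × ℝ) (T : Set (Pt d)) (f : Pt d → ℝ) : ℝ :=
  (∑ i, rLoss T (D i).1 (D i).2 (f (D i).1)) / (n : ℝ)

/-- `f_{D,s}`. -/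
def fHat (𝒜 : CubePartition d s) {n : ℕ} (D : Fin n → Pt d × ℝ) (x : Pt d) : ℝ :=
  ((∑ i, if (D i).2 = 1 ∧ (D i).1 ∈ 𝒜.cellOf x then (1 : ℝ) else 0) -
      ∑ i, if (D i).2 = -1 ∧ (D i).1 ∈ 𝒜.cellOf x then (1 : ℝ) else 0) / (n : ℝ)

/-- The empirical histogram rule `h_{D,s} = sign f_{D,s}`. -/
def histRule (𝒜 : CubePartition d s) {n : ℕ} (D : Fin n → Pt d × ℝ) (x : Pt d) : ℝ :=
  sgn (fHat 𝒜 D x)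

/-- `f_{P,s}`. -/
def fBar (𝒜 : CubePartition d s) (P : Measure (Pt d × ℝ)) (x : Pt d) : ℝ :=
  (P (𝒜.cellOf x ×ˢ ({1} : Set ℝ))).toReal - (P (𝒜.cellOf x ×ˢ ({-1} : Set ℝ))).toReal

/-- The infinite-sample histogram rule `h_{P,s} = sign f_{P,s}`. -/
def histRuleP (𝒜 : CubePartition d s) (P : Measure (Pt d × ℝ)) (x : Pt d) : ℝ :=
  sgn (fBar 𝒜 P x)

/-- The class `𝓕` of `±1`-valued functions which are constant on the cells meeting `X`
(and `0` elsewhere). -/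
def histClass (𝒜 : CubePartition d s) : Set (Pt d → ℝ) :=
  {f | ∃ c : ℕ → ℝ, (∀ j, c j = 1 ∨ c j = -1) ∧
    ∀ x, f x = if 𝒜.idx x ∈ 𝒜.J then c (𝒜.idx x) else 0}

/-- The `n`-fold product measure `P^n`. -/
def Pn (μ : Measure (Pt d)) (η : Pt d → ℝ) (n : ℕ) : Measure (Fin n → Pt d × ℝ) :=
  Measure.pi fun _ => joint μ η


namespace Aux

variable {d : ℕ} {s : ℝ}

lemma delta_nonneg (η : Pt d → ℝ) (x : Pt d) : 0 ≤ Δ η x := by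
  unfold Δ; split_ifs <;> first | exact Metric.infDist_nonneg | exact le_rfl

lemma delta_lip (η : Pt d → ℝ) (hbd1 : X0 η = relBoundary (cubeX d) (X1 η))
    (hbd2 : X0 η = relBoundary (cubeX d) (Xm1 η))
    {x y : Pt d} (hx : x ∈ cubeX d) :
    Δ η y ≤ Δ η x + dist y x := by
  have hd0 : 0 ≤ dist y x := dist_nonneg
  have hΔx : 0 ≤ Δ η x := delta_nonneg η x
  by_cases hy1 : y ∈ Xm1 η
  · rw [Δ, if_pos hy1]
    by_cases hx1 : x ∈ Xm1 η
    · rw [Δ, if_pos hx1]; exact Metric.infDist_le_infDist_add_dist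
    by_cases hx2 : x ∈ X1 η
    · have := Metric.infDist_le_dist_of_mem (x := y) hx2
      rw [Δ, if_neg hx1, if_pos hx2]
      have := Metric.infDist_nonneg (x := x) (s := Xm1 η)
      linarith
    · have hx0 : x ∈ X0 η := by
        refine ⟨hx, ?_⟩
        rcases lt_trichotomy (η x) (1/2) with h | h | h
        · exact absurd ⟨hx, h⟩ hx1
        · exact h
        · exact absurd ⟨hx, h⟩ hx2
      have hcl : x ∈ closure (X1 η) := by rw [hbd1] at hx0; exact hx0.1.1
      rw [Δ, if_neg hx1, if_neg hx2]
      have h1 : infDist y (X1 η) = infDist y (closure (X1 η)) := Metric.infDist_closure.symm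
      have h2 := Metric.infDist_le_dist_of_mem (x := y) hcl
      linarith
  by_cases hy2 : y ∈ X1 η
  · rw [Δ, if_neg hy1, if_pos hy2]
    by_cases hx2 : x ∈ X1 η
    · rw [Δ, if_neg (fun h : x ∈ Xm1 η => absurd hx2.2 (not_lt.mpr h.2.le)), if_pos hx2]
      exact Metric.infDist_le_infDist_add_dist
    by_cases hx1 : x ∈ Xm1 η
    · have := Metric.infDist_le_dist_of_mem (x := y) hx1
      linarith
    · have hx0 : x ∈ X0 η := by
        refine ⟨hx, ?_⟩
        rcases lt_trichotomy (η x) (1/2) with h | h | h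
        · exact absurd ⟨hx, h⟩ hx1
        · exact h
        · exact absurd ⟨hx, h⟩ hx2
      have hcl : x ∈ closure (Xm1 η) := by rw [hbd2] at hx0; exact hx0.1.1
      have h1 : infDist y (Xm1 η) = infDist y (closure (Xm1 η)) := Metric.infDist_closure.symm
      have h2 := Metric.infDist_le_dist_of_mem (x := y) hcl
      linarith
  · rw [Δ, if_neg hy1, if_neg hy2]; linarith

lemma measurable_cell (𝒜 : CubePartition d s) (j : ℕ) : MeasurableSet (𝒜.cell j) := by
  obtain ⟨a, ha⟩ := 𝒜.isCube j
  rw [ha]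
  have : {x : Pt d | ∀ i, a i ≤ x i ∧ x i < a i + s} =
      Set.univ.pi (fun i => Set.Ico (a i) (a i + s)) := by
    ext x; simp [Set.mem_pi, Set.mem_Ico]
  rw [this]
  exact MeasurableSet.univ_pi (fun i => measurableSet_Ico)

lemma measurable_Nr (𝒜 : CubePartition d s) (η : Pt d → ℝ) (r : ℝ) :
    MeasurableSet (𝒜.Nr η r) :=
  MeasurableSet.biUnion (Set.to_countable _) fun j _ => measurable_cell 𝒜 j

lemma measurable_Fr (𝒜 : CubePartition d s) (η : Pt d → ℝ) (r : ℝ) :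
    MeasurableSet (𝒜.Fr η r) :=
  MeasurableSet.biUnion (Set.to_countable _) fun j _ => measurable_cell 𝒜 j

/-- Every cell meeting `X` is near or far. -/
lemma J_split (𝒜 : CubePartition d s) (η : Pt d → ℝ)
    (hbd1 : X0 η = relBoundary (cubeX d) (X1 η))
    (hbd2 : X0 η = relBoundary (cubeX d) (Xm1 η))
    {r : ℝ} (hs : 0 < s) (hs2 : s ≤ 2 * r) {j : ℕ} (hj : j ∈ 𝒜.J) :
    j ∈ 𝒜.JN η r ∪ 𝒜.JF η r := by
  by_cases hF : ∀ x ∈ 𝒜.cell j ∩ cubeX d, r ≤ Δ η x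
  · exact Or.inr ⟨hj, hF⟩
  · push_neg at hF
    obtain ⟨x, hxc, hxr⟩ := hF
    refine Or.inl ⟨hj, fun y hyc => ?_⟩
    have hdist : dist y x ≤ s := by
      obtain ⟨a, ha⟩ := 𝒜.isCube j
      rw [ha] at hxc hyc
      rw [dist_pi_le_iff hs.le]
      intro i
      have h1 := hxc.1 i
      have h2 := hyc.1 i
      rw [Real.dist_eq, abs_le]
      constructor <;> linarith
    have := delta_lip η hbd1 hbd2 hxc.2 (y := y)
    linarith

/-- Conditional risk of a decision. -/
def phi (η f : Pt d → ℝ) (x : Pt d) : ℝ := if 0 ≤ f x then 1 - η x else η x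

lemma measurable_sgn : Measurable sgn := by
  unfold sgn
  exact Measurable.ite measurableSet_Ici measurable_const measurable_const

lemma measurable_phi {η f : Pt d → ℝ} (hη : Measurable η) (hf : Measurable f) :
    Measurable (phi η f) := by
  unfold phi
  exact Measurable.ite (measurableSet_le measurable_const hf)
    (measurable_const.sub hη) hη

lemma phi_nonneg {η f : Pt d → ℝ} (hη : ∀ x, η x ∈ Set.Icc (0:ℝ) 1) (x : Pt d) :
    0 ≤ phi η f x := by
  unfold phi; have := hη x; split_ifs <;> [linarith [this.2]; exact this.1]

lemma phi_le_one {η f : Pt d → ℝ} (hη : ∀ x, η x ∈ Set.Icc (0:ℝ) 1) (x : Pt d) :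
    phi η f x ≤ 1 := by
  unfold phi; have := hη x; split_ifs <;> [linarith [this.1]; exact this.2]

lemma phi_bayes_le (η : Pt d → ℝ) (f : Pt d → ℝ) (x : Pt d) :
    phi η (bayesF η) x ≤ phi η f x := by
  unfold phi bayesF sgn
  by_cases h : (0:ℝ) ≤ 2 * η x - 1
  · rw [if_pos h, if_pos (by norm_num : (0:ℝ) ≤ 1)]
    split_ifs <;> linarith
  · rw [if_neg h, if_neg (by norm_num : ¬ (0:ℝ) ≤ (-1:ℝ))]
    split_ifs <;> linarith

lemma measurable_kernel {η : Pt d → ℝ} (hη : Measurable η) :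
    Measurable (fun x : Pt d =>
      ENNReal.ofReal (η x) • Measure.dirac (x, (1:ℝ)) +
      ENNReal.ofReal (1 - η x) • Measure.dirac (x, (-1:ℝ))) := by
  apply Measure.measurable_of_measurable_coe
  intro t ht
  simp only [Measure.coe_add, Pi.add_apply, Measure.smul_apply, smul_eq_mul,
    Measure.dirac_apply' _ ht]
  apply Measurable.add
  · exact (ENNReal.measurable_ofReal.comp hη).mul
      ((measurable_one.indicator ht).comp (measurable_id.prodMk measurable_const))
  · exact (ENNReal.measurable_ofReal.comp (measurable_const.sub hη)).mul
      ((measurable_one.indicator ht).comp (measurable_id.prodMk measurable_const))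

lemma measurable_rloss {T : Set (Pt d)} (hT : MeasurableSet T) {f : Pt d → ℝ}
    (hf : Measurable f) :
    Measurable (fun z : Pt d × ℝ => rLoss T z.1 z.2 (f z.1)) := by
  unfold rLoss cLoss
  have h1 : Measurable (fun z : Pt d × ℝ => z.2 * sgn (f z.1)) :=
    measurable_snd.mul (measurable_sgn.comp (hf.comp measurable_fst))
  exact Measurable.ite (hT.preimage measurable_fst)
    (Measurable.ite (measurableSet_le h1 measurable_const) measurable_const measurable_const)
    measurable_const

lemma risk_eq {μ : Measure (Pt d)} {η : Pt d → ℝ}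
    (hη : ∀ x, η x ∈ Set.Icc (0:ℝ) 1) (hmeasη : Measurable η)
    {T : Set (Pt d)} (hT : MeasurableSet T) {f : Pt d → ℝ} (hf : Measurable f) :
    risk (joint μ η) T f = ∫ x, T.indicator (phi η f) x ∂μ := by
  set F : Pt d × ℝ → ℝ := fun z => rLoss T z.1 z.2 (f z.1) with hF
  have hFm : Measurable F := measurable_rloss hT hf
  have hF0 : ∀ z, 0 ≤ F z := by
    intro z; simp only [hF, rLoss, cLoss]; split_ifs <;> norm_num
  have hGm : Measurable (T.indicator (phi η f)) :=
    (measurable_phi hmeasη hf).indicator hT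
  have hG0 : ∀ x, 0 ≤ T.indicator (phi η f) x := fun x =>
    Set.indicator_nonneg (fun y _ => phi_nonneg hη y) x
  have hL : risk (joint μ η) T f
      = (∫⁻ z, ENNReal.ofReal (F z) ∂(joint μ η)).toReal := by
    unfold risk
    exact integral_eq_lintegral_of_nonneg_ae (ae_of_all _ hF0) hFm.aestronglyMeasurable
  have hR : (∫ x, T.indicator (phi η f) x ∂μ)
      = (∫⁻ x, ENNReal.ofReal (T.indicator (phi η f) x) ∂μ).toReal :=
    integral_eq_lintegral_of_nonneg_ae (ae_of_all _ hG0) hGm.aestronglyMeasurable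
  rw [hL, hR]
  congr 1
  unfold joint
  rw [MeasureTheory.Measure.lintegral_bind (measurable_kernel hmeasη).aemeasurable hFm.ennreal_ofReal.aemeasurable]
  apply lintegral_congr
  intro x
  rw [lintegral_add_measure, lintegral_smul_measure, lintegral_smul_measure,
    lintegral_dirac' _ hFm.ennreal_ofReal, lintegral_dirac' _ hFm.ennreal_ofReal]
  have hx := hη x
  by_cases hxT : x ∈ T
  · by_cases hfx : 0 ≤ f x
    · have e1 : F (x, 1) = 0 := by
        simp only [hF, rLoss, cLoss, sgn, if_pos hxT, if_pos hfx]; norm_num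
      have e2 : F (x, -1) = 1 := by
        simp only [hF, rLoss, cLoss, sgn, if_pos hxT, if_pos hfx]; norm_num
      have e3 : T.indicator (phi η f) x = 1 - η x := by
        rw [Set.indicator_of_mem hxT]; simp [phi, hfx]
      rw [e1, e2, e3]
      simp
    · have e1 : F (x, 1) = 1 := by
        simp only [hF, rLoss, cLoss, sgn, if_pos hxT, if_neg hfx]; norm_num
      have e2 : F (x, -1) = 0 := by
        simp only [hF, rLoss, cLoss, sgn, if_pos hxT, if_neg hfx]; norm_num
      have e3 : T.indicator (phi η f) x = η x := by
        rw [Set.indicator_of_mem hxT]; simp [phi, hfx]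
      rw [e1, e2, e3]
      simp
  · have e1 : F (x, 1) = 0 := by simp only [hF, rLoss, if_neg hxT]
    have e2 : F (x, -1) = 0 := by simp only [hF, rLoss, if_neg hxT]
    have e3 : T.indicator (phi η f) x = 0 := Set.indicator_of_notMem hxT _
    rw [e1, e2, e3]
    simp

lemma measurable_bayesF {η : Pt d → ℝ} (hmeasη : Measurable η) :
    Measurable (bayesF η) :=
  measurable_sgn.comp ((measurable_const.mul hmeasη).sub measurable_const)

lemma integrable_ind_bdd {μ : Measure (Pt d)} [IsProbabilityMeasure μ] {g : Pt d → ℝ}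
    (hg : Measurable g) (h0 : ∀ x, 0 ≤ g x) (h1 : ∀ x, g x ≤ 1)
    {T : Set (Pt d)} (hT : MeasurableSet T) : Integrable (T.indicator g) μ := by
  refine Integrable.mono' (integrable_const 1) ((hg.indicator hT).aestronglyMeasurable)
    (ae_of_all _ fun x => ?_)
  rw [Real.norm_eq_abs, abs_le]
  by_cases hx : x ∈ T
  · rw [Set.indicator_of_mem hx]
    exact ⟨by linarith [h0 x], h1 x⟩
  · rw [Set.indicator_of_notMem hx]
    norm_num

lemma risk_nonneg (P : Measure (Pt d × ℝ)) (T : Set (Pt d)) (f : Pt d → ℝ) :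
    0 ≤ risk P T f := by
  refine integral_nonneg fun z => ?_
  simp only [rLoss, cLoss]
  split_ifs <;> norm_num

lemma bayesRisk_eq {μ : Measure (Pt d)} [IsProbabilityMeasure μ] {η : Pt d → ℝ}
    (hη : ∀ x, η x ∈ Set.Icc (0:ℝ) 1) (hmeasη : Measurable η)
    {T : Set (Pt d)} (hT : MeasurableSet T) :
    bayesRisk (joint μ η) T = risk (joint μ η) T (bayesF η) := by
  have hbdd : BddBelow (Set.range fun g : {f : Pt d → ℝ // Measurable f} =>
      risk (joint μ η) T g.1) := ⟨0, by rintro c ⟨g, rfl⟩; exact risk_nonneg _ _ _⟩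
  haveI : Nonempty {f : Pt d → ℝ // Measurable f} := ⟨⟨fun _ => 0, measurable_const⟩⟩
  apply le_antisymm
  · exact ciInf_le hbdd ⟨bayesF η, measurable_bayesF hmeasη⟩
  · apply le_ciInf
    rintro ⟨g, hg⟩
    rw [risk_eq hη hmeasη hT (measurable_bayesF hmeasη), risk_eq hη hmeasη hT hg]
    apply integral_mono
    · exact integrable_ind_bdd (measurable_phi hmeasη (measurable_bayesF hmeasη))
        (phi_nonneg hη) (phi_le_one hη) hT
    · exact integrable_ind_bdd (measurable_phi hmeasη hg) (phi_nonneg hη) (phi_le_one hη) hT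
    · intro x
      by_cases hx : x ∈ T
      · rw [Set.indicator_of_mem hx, Set.indicator_of_mem hx]
        exact phi_bayes_le η g x
      · rw [Set.indicator_of_notMem hx]
        exact le_of_eq (Set.indicator_of_notMem hx _).symm


end Aux

theorem statement3 (d : ℕ) (hd : 1 ≤ d) (s : ℝ) (hs : s ∈ Set.Ioc (0 : ℝ) 1)
    (𝒜 : CubePartition d s) (r : ℝ) (hr : s / 2 ≤ r)
    (μ : Measure (Pt d)) [IsProbabilityMeasure μ] (hμX : μ (cubeX d)ᶜ = 0)
    (η : Pt d → ℝ) (hη : ∀ x, η x ∈ Set.Icc (0 : ℝ) 1) (hmeasη : Measurable η)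
    (hbd1 : X0 η = relBoundary (cubeX d) (X1 η))
    (hbd2 : X0 η = relBoundary (cubeX d) (Xm1 η))
    (f : Pt d → ℝ) (hf : Measurable f) :
    risk (joint μ η) Set.univ f - bayesRisk (joint μ η) Set.univ ≤
      (risk (joint μ η) (𝒜.Nr η r) f - bayesRisk (joint μ η) (𝒜.Nr η r)) +
        (risk (joint μ η) (𝒜.Fr η r) f - bayesRisk (joint μ η) (𝒜.Fr η r)) := by
  have hs0 : 0 < s := hs.1
  have hs2r : s ≤ 2 * r := by linarith
  set b := bayesF η with hb
  have hmb : Measurable b := Aux.measurable_bayesF hmeasη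
  have hNm := Aux.measurable_Nr 𝒜 η r
  have hFrm := Aux.measurable_Fr 𝒜 η r
  set ψ : Pt d → ℝ := fun x => Aux.phi η f x - Aux.phi η b x with hψ
  have hψm : Measurable ψ := (Aux.measurable_phi hmeasη hf).sub (Aux.measurable_phi hmeasη hmb)
  have hψ0 : ∀ x, 0 ≤ ψ x := fun x => sub_nonneg.mpr (Aux.phi_bayes_le η f x)
  have hψ1 : ∀ x, ψ x ≤ 1 := fun x => by
    have := Aux.phi_le_one (f := f) hη x
    have := Aux.phi_nonneg (f := b) hη x
    simp only [hψ]; linarith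
  rw [Aux.bayesRisk_eq hη hmeasη MeasurableSet.univ,
      Aux.bayesRisk_eq hη hmeasη hNm, Aux.bayesRisk_eq hη hmeasη hFrm,
      Aux.risk_eq hη hmeasη MeasurableSet.univ hf, Aux.risk_eq hη hmeasη MeasurableSet.univ hmb,
      Aux.risk_eq hη hmeasη hNm hf, Aux.risk_eq hη hmeasη hNm hmb,
      Aux.risk_eq hη hmeasη hFrm hf, Aux.risk_eq hη hmeasη hFrm hmb]
  have key : ∀ T : Set (Pt d), MeasurableSet T →
      (∫ x, T.indicator (Aux.phi η f) x ∂μ) - (∫ x, T.indicator (Aux.phi η b) x ∂μ)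
        = ∫ x, T.indicator ψ x ∂μ := by
    intro T hT
    rw [← integral_sub
      (Aux.integrable_ind_bdd (μ := μ) (Aux.measurable_phi hmeasη hf) (Aux.phi_nonneg hη)
        (Aux.phi_le_one hη) hT)
      (Aux.integrable_ind_bdd (μ := μ) (Aux.measurable_phi hmeasη hmb) (Aux.phi_nonneg hη)
        (Aux.phi_le_one hη) hT)]
    apply integral_congr_ae
    refine ae_of_all _ fun x => ?_
    by_cases hx : x ∈ T
    · simp [Set.indicator_of_mem hx, hψ]
    · simp [Set.indicator_of_notMem hx]
  rw [key _ MeasurableSet.univ, key _ hNm, key _ hFrm]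
  have hintN := Aux.integrable_ind_bdd (μ := μ) hψm hψ0 hψ1 hNm
  have hintF := Aux.integrable_ind_bdd (μ := μ) hψm hψ0 hψ1 hFrm
  have hintU := Aux.integrable_ind_bdd (μ := μ) hψm hψ0 hψ1 (MeasurableSet.univ (α := Pt d))
  have hcov : ∀ x ∈ cubeX d, x ∈ 𝒜.Nr η r ∪ 𝒜.Fr η r := by
    intro x hx
    obtain ⟨j, hj, -⟩ := 𝒜.covers x
    have hjJ : j ∈ 𝒜.J := ⟨x, hj, hx⟩
    rcases Aux.J_split 𝒜 η hbd1 hbd2 hs0 hs2r hjJ with h | h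
    · exact Or.inl (Set.mem_biUnion h hj)
    · exact Or.inr (Set.mem_biUnion h hj)
  have hae : ∀ᵐ x ∂μ, x ∈ cubeX d := by
    rw [ae_iff]
    exact hμX
  rw [← integral_add hintN hintF]
  apply integral_mono_ae hintU (hintN.add hintF)
  filter_upwards [hae] with x hx
  simp only [Set.indicator_univ, Pi.add_apply]
  rcases hcov x hx with h | h
  · have h2 : 0 ≤ (𝒜.Fr η r).indicator ψ x := Set.indicator_nonneg (fun y _ => hψ0 y) x
    rw [Set.indicator_of_mem h]
    linarith
  · have h2 : 0 ≤ (𝒜.Nr η r).indicator ψ x := Set.indicator_nonneg (fun y _ => hψ0 y) x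
    rw [Set.indicator_of_mem h]
    linarith

end RefinedMargin
end
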